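/- arXiv:2402.01342 — 3 statements merged into one kernel-verified Lean document; each statement's English description precedes it below -/
import Mathlib

section
/- Fix vectors v, v' ∈ ℝ^h, matrices U, U' ∈ ℝ^{h×d}, x ∈ ℝ^d, and α₀ ∈ (0,1) such that every coordinate of g_{α₀}(x) is nonzero. Then α ↦ z_x(α) is twice differentiable at α₀ and its second derivative there equals 2(v−v')ᵀ(1_{g_{α₀}(x)>0} ⊙ (U−U')x); in particular the term involving the second derivative of the activation vanishes. -/
open MeasureTheory ProbabilityTheory Real Finset

/-- Elementwise ReLU. -/
noncomputable def relu (t : ℝ) : ℝ := max t 0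

/-- The pointwise interpolation gap
`z_x(α) = (αv+(1−α)v')ᵀσ((αU+(1−α)U')x) − α vᵀσ(Ux) − (1−α) v'ᵀσ(U'x)`. -/
noncomputable def zfun {h d : ℕ} (v v' : Fin h → ℝ) (U U' : Fin h → Fin d → ℝ)
    (x : EuclideanSpace ℝ (Fin d)) (α : ℝ) : ℝ :=
  (∑ i, (α * v i + (1 - α) * v' i) *
      relu (∑ j, (α * U i j + (1 - α) * U' i j) * x j))
    - α * ∑ i, v i * relu (∑ j, U i j * x j)
    - (1 - α) * ∑ i, v' i * relu (∑ j, U' i j * x j)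

/-- The second-derivative expression `S_x(α) = 2(v−v')ᵀ(1_{g_α(x)>0} ⊙ (U−U')x)`. -/
noncomputable def Sfun {h d : ℕ} (v v' : Fin h → ℝ) (U U' : Fin h → Fin d → ℝ)
    (x : EuclideanSpace ℝ (Fin d)) (α : ℝ) : ℝ :=
  2 * ∑ i, (v i - v' i) *
      ((if 0 < ∑ j, (α * U i j + (1 - α) * U' i j) * x j then (1 : ℝ) else 0) *
        ∑ j, (U i j - U' i j) * x j)

theorem stmt4 {h d : ℕ} (v v' : Fin h → ℝ) (U U' : Fin h → Fin d → ℝ)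
    (x : EuclideanSpace ℝ (Fin d)) (α₀ : ℝ) (hα : α₀ ∈ Set.Ioo (0 : ℝ) 1)
    (hg : ∀ i, (∑ j, (α₀ * U i j + (1 - α₀) * U' i j) * x j) ≠ 0) :
    DifferentiableAt ℝ (fun α => zfun v v' U U' x α) α₀ ∧
      HasDerivAt (deriv (fun α => zfun v v' U U' x α)) (Sfun v v' U U' x α₀) α₀ := by
  classical
  set a : Fin h → ℝ := fun i => ∑ j, U i j * x j with ha
  set b : Fin h → ℝ := fun i => ∑ j, U' i j * x j with hb
  have hsum : ∀ (α : ℝ) (i : Fin h),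
      (∑ j, (α * U i j + (1 - α) * U' i j) * x j) = α * a i + (1 - α) * b i := by
    intro α i
    simp only [ha, hb, Finset.mul_sum, add_mul, Finset.sum_add_distrib, mul_assoc]
  set s : Fin h → ℝ := fun i => if 0 < α₀ * a i + (1 - α₀) * b i then 1 else 0 with hs
  set C : ℝ := ∑ i, v i * relu (a i) with hC
  set C' : ℝ := ∑ i, v' i * relu (b i) with hC'
  set F : ℝ → ℝ := fun α =>
    (∑ i, (α * v i + (1 - α) * v' i) * (s i * (α * a i + (1 - α) * b i)))
      - α * C - (1 - α) * C' with hF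
  set F' : ℝ → ℝ := fun α =>
    (∑ i, ((v i - v' i) * (s i * (α * a i + (1 - α) * b i))
        + (α * v i + (1 - α) * v' i) * (s i * (a i - b i)))) - C + C' with hF'
  have hlin : ∀ (p q : ℝ) (α : ℝ),
      HasDerivAt (fun α : ℝ => α * p + (1 - α) * q) (p - q) α := by
    intro p q α
    have := ((hasDerivAt_id α).mul_const p).add
      (((hasDerivAt_const α (1:ℝ)).sub (hasDerivAt_id α)).mul_const q)
    exact this.congr_deriv (by ring)
  have hdF : ∀ α, HasDerivAt F (F' α) α := by
    intro α
    have hσ : HasDerivAt (fun α : ℝ =>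
        ∑ i, (α * v i + (1 - α) * v' i) * (s i * (α * a i + (1 - α) * b i)))
        (∑ i, ((v i - v' i) * (s i * (α * a i + (1 - α) * b i))
          + (α * v i + (1 - α) * v' i) * (s i * (a i - b i)))) α := by
      apply HasDerivAt.fun_sum
      intro i _
      have h2 : HasDerivAt (fun α : ℝ => s i * (α * a i + (1 - α) * b i))
          (s i * (a i - b i)) α := (hlin (a i) (b i) α).const_mul (s i)
      exact (hlin (v i) (v' i) α).mul h2
    have := (hσ.sub ((hasDerivAt_id α).mul_const C)).sub
      (((hasDerivAt_const α (1:ℝ)).sub (hasDerivAt_id α)).mul_const C')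
    refine this.congr_deriv ?_
    simp only [hF']
    ring
  have hdF' : HasDerivAt F' (Sfun v v' U U' x α₀) α₀ := by
    have hσ : HasDerivAt (fun α : ℝ =>
        ∑ i, ((v i - v' i) * (s i * (α * a i + (1 - α) * b i))
          + (α * v i + (1 - α) * v' i) * (s i * (a i - b i))))
        (∑ i, ((v i - v' i) * (s i * (a i - b i))
          + (v i - v' i) * (s i * (a i - b i)))) α₀ := by
      apply HasDerivAt.fun_sum
      intro i _
      exact (((hlin (a i) (b i) α₀).const_mul (s i)).const_mul (v i - v' i)).add
        ((hlin (v i) (v' i) α₀).mul_const (s i * (a i - b i)))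
    have h0 : HasDerivAt F' (∑ i, ((v i - v' i) * (s i * (a i - b i))
        + (v i - v' i) * (s i * (a i - b i)))) α₀ :=
      (hσ.sub_const C).add_const C'
    convert h0 using 1
    have habs : ∀ i : Fin h, (∑ j, (U i j - U' i j) * x j) = a i - b i := by
      intro i
      simp only [ha, hb, sub_mul, Finset.sum_sub_distrib]
    simp only [Sfun, hsum, habs, hs, Finset.mul_sum]
    apply Finset.sum_congr rfl
    intro i _
    ring
  -- local equality of zfun and F
  have hrelu : ∀ᶠ α in nhds α₀, ∀ i : Fin h,
      relu (α * a i + (1 - α) * b i) = s i * (α * a i + (1 - α) * b i) := by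
    rw [Filter.eventually_all]
    intro i
    have hcont : ContinuousAt (fun α : ℝ => α * a i + (1 - α) * b i) α₀ := by fun_prop
    have hne : α₀ * a i + (1 - α₀) * b i ≠ 0 := by
      have := hg i; rwa [hsum α₀ i] at this
    rcases hne.lt_or_gt with hneg | hpos
    · have hev : ∀ᶠ α in nhds α₀, α * a i + (1 - α) * b i < 0 :=
        hcont.eventually_lt continuousAt_const hneg
      filter_upwards [hev] with α hα
      simp [relu, hs, max_eq_right hα.le, not_lt.2 hneg.le]
    · have hev : ∀ᶠ α in nhds α₀, 0 < α * a i + (1 - α) * b i :=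
        continuousAt_const.eventually_lt hcont hpos
      filter_upwards [hev] with α hα
      simp [relu, hs, max_eq_left hα.le, hpos]
  have hloc : (fun α => zfun v v' U U' x α) =ᶠ[nhds α₀] F := by
    filter_upwards [hrelu] with α hα
    simp only [zfun, hF, hsum, hα, hC, hC']
    rfl
  have hdiff : DifferentiableAt ℝ (fun α => zfun v v' U U' x α) α₀ :=
    (hdF α₀).differentiableAt.congr_of_eventuallyEq hloc
  refine ⟨hdiff, ?_⟩
  have hderiv_eq : deriv (fun α => zfun v v' U U' x α) =ᶠ[nhds α₀] F' := by
    have h1 : deriv (fun α => zfun v v' U U' x α) =ᶠ[nhds α₀] deriv F := hloc.deriv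
    have h2 : deriv F = F' := funext fun α => (hdF α).deriv
    rw [h2] at h1; exact h1
  exact hdF'.congr_of_eventuallyEq hderiv_eq
end

section
/- Let M_U ∈ {0,1}^{h×d} be a 0/1 matrix with z₀ zero entries, and let X = {x ∈ ℝ^d : ‖x‖₂ < b}. Then (1/vol(X)) ∫_X √(Σ_{i=1}^h ‖M_{U,i,:} ⊙ x‖₂²) dx ≤ √((h − z₀/d) · d b²/(d+2)), where M_{U,i,:} denotes the i-th row of M_U and ⊙ the entrywise product. -/
open MeasureTheory ProbabilityTheory Real Finset
open Metric Set

lemma normSq_int (d : ℕ) (hd : 1 ≤ d) (b : ℝ) (hb : 0 < b) :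
    ∫ x in Metric.ball (0:EuclideanSpace ℝ (Fin d)) b, ‖x‖^2
      = d * (volume (Metric.ball (0:EuclideanSpace ℝ (Fin d)) 1)).toReal * (b^(d+2)/(d+2)) := by
  haveI : Nonempty (Fin d) := ⟨⟨0, by omega⟩⟩
  have hdim : Module.finrank ℝ (EuclideanSpace ℝ (Fin d)) = d := by
    simp [finrank_euclideanSpace]
  have h1 : ∫ x in Metric.ball (0:EuclideanSpace ℝ (Fin d)) b, ‖x‖^2
      = ∫ x : EuclideanSpace ℝ (Fin d), (Set.Iio b).indicator (fun y => y^2) ‖x‖ := by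
    rw [← integral_indicator measurableSet_ball]
    congr 1
    ext x
    by_cases hx : x ∈ Metric.ball (0:EuclideanSpace ℝ (Fin d)) b
    · rw [Set.indicator_of_mem hx, Set.indicator_of_mem (by simpa [mem_ball_zero_iff] using hx)]
    · rw [Set.indicator_of_notMem hx, Set.indicator_of_notMem (by simpa [mem_ball_zero_iff] using hx)]
  rw [h1, integral_fun_norm_addHaar volume (fun y => (Set.Iio b).indicator (fun y => y^2) y), hdim]
  have h2 : ∫ y in Set.Ioi (0:ℝ), y ^ (d-1) • (Set.Iio b).indicator (fun y => y^2) y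
      = b^(d+2)/(d+2) := by
    have h1 : ∀ y : ℝ, y ^ (d-1) • (Set.Iio b).indicator (fun y => y^2) y
        = (Set.Iio b).indicator (fun y => y ^ (d+1)) y := by
      intro y
      by_cases hy : y ∈ Set.Iio b
      · rw [Set.indicator_of_mem hy, Set.indicator_of_mem hy, smul_eq_mul, ← pow_add]
        congr 1; omega
      · simp [Set.indicator_of_notMem hy]
    simp_rw [h1]
    rw [integral_indicator measurableSet_Iio, Measure.restrict_restrict measurableSet_Iio,
      Set.Iio_inter_Ioi, ← integral_Ioc_eq_integral_Ioo,
      ← intervalIntegral.integral_of_le hb.le, integral_pow]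
    push_cast
    ring_nf
  rw [h2]
  simp [nsmul_eq_mul, smul_eq_mul, mul_assoc, measureReal_def]

lemma intOn_ball {d : ℕ} {b : ℝ} {g : EuclideanSpace ℝ (Fin d) → ℝ} (hg : Continuous g) :
    IntegrableOn g (Metric.ball (0:EuclideanSpace ℝ (Fin d)) b) :=
  ((hg.continuousOn).integrableOn_compact (isCompact_closedBall _ _)).mono_set
    ball_subset_closedBall

lemma coord_cont {d : ℕ} (j : Fin d) : Continuous fun x : EuclideanSpace ℝ (Fin d) => x j :=
  (EuclideanSpace.proj j).continuous

lemma coord_swap (d : ℕ) (b : ℝ) (j k : Fin d) :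
    ∫ x in Metric.ball (0:EuclideanSpace ℝ (Fin d)) b, (x j)^2
      = ∫ x in Metric.ball (0:EuclideanSpace ℝ (Fin d)) b, (x k)^2 := by
  set e : EuclideanSpace ℝ (Fin d) ≃ₗᵢ[ℝ] EuclideanSpace ℝ (Fin d) :=
    LinearIsometryEquiv.piLpCongrLeft 2 ℝ ℝ (Equiv.swap j k) with he
  have hpre : e ⁻¹' (Metric.ball (0:EuclideanSpace ℝ (Fin d)) b)
      = Metric.ball (0:EuclideanSpace ℝ (Fin d)) b := by
    ext x
    simp [mem_ball_zero_iff, e.norm_map]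
  have hmp := e.measurePreserving
  have h2 := hmp.setIntegral_preimage_emb
    (e.toHomeomorph.measurableEmbedding)
    (fun x : EuclideanSpace ℝ (Fin d) => (x k)^2) (Metric.ball (0:EuclideanSpace ℝ (Fin d)) b)
  rw [hpre] at h2
  rw [← h2]
  refine setIntegral_congr_fun measurableSet_ball (fun x _ => ?_)
  have : (e x) k = x j := by
    rw [he]
    show (Equiv.piCongrLeft' (fun _ => ℝ) (Equiv.swap j k) x) k = x j
    rw [Equiv.piCongrLeft'_apply]
    rw [Equiv.symm_swap, Equiv.swap_apply_right]
  rw [this]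

lemma coord_int (d : ℕ) (hd : 1 ≤ d) (b : ℝ) (hb : 0 < b) (j : Fin d) :
    ∫ x in Metric.ball (0:EuclideanSpace ℝ (Fin d)) b, (x j)^2
      = (volume (Metric.ball (0:EuclideanSpace ℝ (Fin d)) b)).toReal * (b^2/(d+2)) := by
  have hdim : Module.finrank ℝ (EuclideanSpace ℝ (Fin d)) = d := by
    simp [finrank_euclideanSpace]
  have hsum : (d : ℝ) * ∫ x in Metric.ball (0:EuclideanSpace ℝ (Fin d)) b, (x j)^2
      = ∫ x in Metric.ball (0:EuclideanSpace ℝ (Fin d)) b, ‖x‖^2 := by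
    have h1 : ∫ x in Metric.ball (0:EuclideanSpace ℝ (Fin d)) b, ‖x‖^2
        = ∑ k : Fin d, ∫ x in Metric.ball (0:EuclideanSpace ℝ (Fin d)) b, (x k)^2 := by
      rw [← integral_finset_sum _ (f := fun k (x : EuclideanSpace ℝ (Fin d)) => (x k)^2) (fun k _ => intOn_ball ((coord_cont k).pow 2))]
      refine setIntegral_congr_fun measurableSet_ball (fun x _ => ?_)
      rw [EuclideanSpace.norm_eq, Real.sq_sqrt (Finset.sum_nonneg fun i _ => sq_nonneg _)]
      simp [sq_abs]
    rw [h1]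
    rw [Finset.sum_congr rfl (fun k _ => coord_swap d b k j)]
    simp [mul_comm]
  haveI : Nonempty (Fin d) := ⟨⟨0, by omega⟩⟩
  have hvol1 : volume (Metric.ball (0:EuclideanSpace ℝ (Fin d)) b)
      = ENNReal.ofReal (b ^ d) * volume (Metric.ball (0:EuclideanSpace ℝ (Fin d)) 1) := by
    rw [Measure.addHaar_ball volume 0 hb.le, hdim]
  have hd0 : (d:ℝ) ≠ 0 := by positivity
  have h2 := normSq_int d hd b hb
  rw [← hsum] at h2
  have : ∫ x in Metric.ball (0:EuclideanSpace ℝ (Fin d)) b, (x j)^2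
      = (volume (Metric.ball (0:EuclideanSpace ℝ (Fin d)) 1)).toReal * (b^(d+2)/(d+2)) := by
    apply mul_left_cancel₀ hd0
    rw [h2]; ring
  rw [this, hvol1, ENNReal.toReal_mul, ENNReal.toReal_ofReal (by positivity)]
  rw [pow_add]
  ring


theorem stmt6 (h d : ℕ) (hh : 1 ≤ h) (hd : 1 ≤ d) (b : ℝ) (hb : 0 < b)
    (MU : Fin h → Fin d → ℝ) (hMU : ∀ i j, MU i j = 0 ∨ MU i j = 1) :
    ⨍ x in Metric.ball (0 : EuclideanSpace ℝ (Fin d)) b,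
        Real.sqrt (∑ i, ∑ j, (MU i j * x j) ^ 2)
      ≤ Real.sqrt
          (((h : ℝ) - ((Finset.univ.filter fun p : Fin h × Fin d => MU p.1 p.2 = 0).card : ℝ) / d) * ((d : ℝ) * b ^ 2 / (d + 2))) := by
  classical
  set t := Metric.ball (0 : EuclideanSpace ℝ (Fin d)) b with ht
  set F : EuclideanSpace ℝ (Fin d) → ℝ := fun x => ∑ i, ∑ j, (MU i j * x j) ^ 2 with hF
  have hFcont : Continuous F := by
    apply continuous_finset_sum
    intro i _
    apply continuous_finset_sum
    intro j _
    exact (continuous_const.mul (coord_cont j)).pow 2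
  have hFi : IntegrableOn F t := intOn_ball hFcont
  have hGi : IntegrableOn (Real.sqrt ∘ F) t := intOn_ball (Real.continuous_sqrt.comp hFcont)
  have h0 : volume t ≠ 0 := (measure_ball_pos volume 0 hb).ne'
  have htop : volume t ≠ ⊤ := measure_ball_lt_top.ne
  have hvolpos : 0 < (volume t).toReal := ENNReal.toReal_pos h0 htop
  -- Jensen
  have hjensen : (⨍ x in t, Real.sqrt (F x)) ≤ Real.sqrt (⨍ x in t, F x) := by
    refine ConcaveOn.le_map_set_average (Real.strictConcaveOn_sqrt.concaveOn)
      Real.continuous_sqrt.continuousOn isClosed_Ici h0 htop ?_ hFi hGi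
    filter_upwards with x
    refine Set.mem_Ici.2 ?_
    exact Finset.sum_nonneg fun i _ => Finset.sum_nonneg fun j _ => sq_nonneg (MU i j * x j)
  -- the count of ones
  set z : ℕ := (Finset.univ.filter fun p : Fin h × Fin d => MU p.1 p.2 = 0).card with hz
  have hcount : (∑ i, ∑ j, (MU i j)^2 : ℝ) = (h : ℝ) * d - z := by
    have e1 : ∑ p ∈ Finset.univ.filter (fun p : Fin h × Fin d => MU p.1 p.2 = 0),
        (MU p.1 p.2)^2 = 0 :=
      Finset.sum_eq_zero fun p hp => by rw [(Finset.mem_filter.1 hp).2]; norm_num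
    have e2 : ∑ p ∈ Finset.univ.filter (fun p : Fin h × Fin d => ¬ MU p.1 p.2 = 0),
        (MU p.1 p.2)^2
        = ((Finset.univ.filter (fun p : Fin h × Fin d => ¬ MU p.1 p.2 = 0)).card : ℝ) := by
      rw [Finset.sum_congr rfl (fun p hp => show (MU p.1 p.2)^2 = (1:ℝ) from by
        rcases hMU p.1 p.2 with h1 | h1
        · exact absurd h1 (Finset.mem_filter.1 hp).2
        · rw [h1]; norm_num)]
      simp
    have hcard : (Finset.univ.filter fun p : Fin h × Fin d => ¬ MU p.1 p.2 = 0).card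
        = h * d - z := by
      have := Finset.card_filter_add_card_filter_not
        (s := (Finset.univ : Finset (Fin h × Fin d)))
        (p := fun p : Fin h × Fin d => MU p.1 p.2 = 0)
      simp only [Finset.card_univ, Fintype.card_prod, Fintype.card_fin] at this
      omega
    have hzle : z ≤ h * d := by
      calc z ≤ (Finset.univ : Finset (Fin h × Fin d)).card := Finset.card_filter_le _ _
      _ = h * d := by simp
    rw [← Finset.sum_product' (f := fun i j => (MU i j)^2), Finset.univ_product_univ,
      ← Finset.sum_filter_add_sum_filter_not Finset.univ
        (fun p : Fin h × Fin d => MU p.1 p.2 = 0), e1, e2, hcard]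
    push_cast [hzle]
    ring
  -- compute the average
  have havg : (⨍ x in t, F x) = ((h : ℝ) * d - z) * (b^2/(d+2)) := by
    rw [setAverage_eq, hF]
    have hint : ∫ x in t, (∑ i, ∑ j, (MU i j * x j) ^ 2) ∂volume
        = ∑ i, ∑ j, ((MU i j)^2 * ((volume t).toReal * (b^2/(d+2)))) := by
      rw [integral_finset_sum _ (f := fun i (x : EuclideanSpace ℝ (Fin d)) => ∑ j, (MU i j * x j)^2) (fun i _ => integrable_finset_sum _
        (fun j _ => intOn_ball ((continuous_const.mul (coord_cont j)).pow 2)))]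
      refine Finset.sum_congr rfl (fun i _ => ?_)
      rw [integral_finset_sum _ (f := fun j (x : EuclideanSpace ℝ (Fin d)) => (MU i j * x j)^2)
        (fun j _ => intOn_ball ((continuous_const.mul (coord_cont j)).pow 2))]
      refine Finset.sum_congr rfl (fun j _ => ?_)
      simp_rw [mul_pow]
      rw [integral_const_mul, ht, coord_int d hd b hb j]
    rw [hint]
    simp_rw [← Finset.sum_mul]
    rw [hcount, smul_eq_mul, measureReal_def]
    field_simp
  refine hjensen.trans ?_
  rw [havg]
  apply Real.sqrt_le_sqrt
  have hd0 : (d:ℝ) ≠ 0 := by positivity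
  have : ((h:ℝ) - (z:ℝ)/d) * ((d:ℝ) * b^2/(d+2)) = ((h:ℝ)*d - z)*(b^2/(d+2)) := by
    field_simp
  rw [this]
end

section
/- Let M_U ∈ {0,1}^{h×d} have z_U zero entries and M_v ∈ {0,1}^h have z_v zero entries, and let X = {x ∈ ℝ^d : ‖x‖₂ < b}. Then (1/vol(X)) ∫_X √(Σ_{i : M_{v,i}=1} ‖M_{U,i,:} ⊙ x‖₂²) dx ≤ √((h − max{z_U, d·z_v}/d) · d b²/(d+2)), where the sum runs over rows i with M_{v,i} = 1. -/
open MeasureTheory ProbabilityTheory Real Finset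


section aux

lemma myIntOn (d : ℕ) (b : ℝ) (f : EuclideanSpace ℝ (Fin d) → ℝ) (hf : Continuous f) :
    IntegrableOn f (Metric.ball (0 : EuclideanSpace ℝ (Fin d)) b) volume :=
  (hf.continuousOn.integrableOn_compact (isCompact_closedBall _ _)).mono_set
    Metric.ball_subset_closedBall

lemma moment_ball (d : ℕ) (hd : 1 ≤ d) (b : ℝ) (hb : 0 < b) :
    ∫ x in Metric.ball (0 : EuclideanSpace ℝ (Fin d)) b, ‖x‖^2
    = (volume (Metric.ball (0 : EuclideanSpace ℝ (Fin d)) b)).toReal * ((d:ℝ) * b^2/(d+2)) := by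
  haveI : Nonempty (Fin d) := ⟨⟨0, hd⟩⟩
  haveI : Nontrivial (EuclideanSpace ℝ (Fin d)) := inferInstance
  set E := EuclideanSpace ℝ (Fin d)
  set G : ℝ → ℝ := fun r => if r < b then r^2 else 0 with hG
  have h1 : ∫ x in Metric.ball (0 : E) b, ‖x‖^2 = ∫ x : E, G ‖x‖ := by
    rw [← integral_indicator measurableSet_ball]
    congr 1
    ext x
    by_cases hx : x ∈ Metric.ball (0:E) b
    · rw [Set.indicator_of_mem hx, hG]; simp only []
      rw [if_pos (mem_ball_zero_iff.mp hx)]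
    · rw [Set.indicator_of_notMem hx, hG]; simp only []
      rw [if_neg (fun h => hx (mem_ball_zero_iff.mpr h))]
  have hdim : Module.finrank ℝ E = d := finrank_euclideanSpace_fin
  have h2 := integral_fun_norm_addHaar (volume : Measure E) G
  rw [hdim] at h2
  have h3 : ∫ y in Set.Ioi (0:ℝ), y ^ (d-1) • G y = b^(d+2)/(d+2) := by
    have : ∀ y ∈ Set.Ioi (0:ℝ), y ^ (d-1) • G y
        = Set.indicator (Set.Iio b) (fun y => y^(d+1)) y := by
      intro y hy
      simp only [smul_eq_mul, hG, Set.indicator_apply, Set.mem_Iio]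
      split_ifs with h
      · rw [← pow_add]; congr 1; omega
      · ring
    rw [setIntegral_congr_fun measurableSet_Ioi this,
      setIntegral_indicator measurableSet_Iio, Set.Ioi_inter_Iio,
      ← integral_Ioc_eq_integral_Ioo, ← intervalIntegral.integral_of_le hb.le,
      integral_pow]
    push_cast
    ring_nf
  have hvol : (volume (Metric.ball (0 : E) b)).toReal
      = b^d * (volume (Metric.ball (0 : E) 1)).toReal := by
    rw [Measure.addHaar_ball volume 0 hb.le, hdim, ENNReal.toReal_mul,
      ENNReal.toReal_ofReal (by positivity)]
  rw [h1, h2, h3, hvol]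
  rw [nsmul_eq_mul, smul_eq_mul]
  have hb2 : ((d:ℝ) + 2) ≠ 0 := by positivity
  have : b^(d+2) = b^d * b^2 := by rw [pow_add]
  rw [this, measureReal_def]
  ring

lemma coord_symm (d : ℕ) (b : ℝ) (j k : Fin d) :
    ∫ x in Metric.ball (0 : EuclideanSpace ℝ (Fin d)) b, (x j)^2
    = ∫ x in Metric.ball (0 : EuclideanSpace ℝ (Fin d)) b, (x k)^2 := by
  set E := EuclideanSpace ℝ (Fin d)
  set e : Fin d ≃ Fin d := Equiv.swap j k with he
  set f : E ≃ₗᵢ[ℝ] E := LinearIsometryEquiv.piLpCongrLeft 2 ℝ ℝ e with hf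
  have hmp : MeasurePreserving f volume volume := f.measurePreserving
  have hemb : MeasurableEmbedding f :=
    f.toHomeomorph.toMeasurableEquiv.measurableEmbedding
  have hpre : f ⁻¹' Metric.ball (0:E) b = Metric.ball (0:E) b := by
    ext x
    simp only [Set.mem_preimage, mem_ball_zero_iff, f.norm_map]
  have := hmp.setIntegral_preimage_emb hemb (fun y => (y j)^2) (Metric.ball (0:E) b)
  rw [hpre] at this
  rw [← this]
  refine setIntegral_congr_fun measurableSet_ball fun x _ => ?_
  have : (f x) j = x (e.symm j) := by
    rw [hf]
    rw [LinearIsometryEquiv.piLpCongrLeft_apply]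
    exact Equiv.piCongrLeft'_apply _ _ _ _
  rw [this, he]
  rw [Equiv.symm_swap, Equiv.swap_apply_left]

lemma coord_moment (d : ℕ) (hd : 1 ≤ d) (b : ℝ) (hb : 0 < b) (j : Fin d) :
    ∫ x in Metric.ball (0 : EuclideanSpace ℝ (Fin d)) b, (x j)^2
    = (volume (Metric.ball (0 : EuclideanSpace ℝ (Fin d)) b)).toReal * (b^2/(d+2)) := by
  set E := EuclideanSpace ℝ (Fin d)
  set B := Metric.ball (0:E) b with hB
  have hsum : ∑ k : Fin d, ∫ x in B, (x k)^2 = ∫ x in B, ‖x‖^2 := by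
    rw [← integral_finset_sum _
      (fun k _ => myIntOn d b (fun x => (x k)^2)
        (by exact ((EuclideanSpace.proj k).continuous).pow 2))]
    refine setIntegral_congr_fun measurableSet_ball fun x _ => ?_
    rw [EuclideanSpace.norm_eq, Real.sq_sqrt (by positivity)]
    simp [sq_abs]
  have heq : ∀ k : Fin d, ∫ x in B, (x k)^2 = ∫ x in B, (x j)^2 :=
    fun k => coord_symm d b k j
  rw [Finset.sum_congr rfl (fun k _ => heq k), Finset.sum_const, Finset.card_univ,
    Fintype.card_fin, moment_ball d hd b hb] at hsum
  have hd0 : (d:ℝ) ≠ 0 := by positivity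
  rw [nsmul_eq_mul] at hsum
  refine mul_left_cancel₀ hd0 ?_
  rw [hsum]; ring

end aux

lemma count_bound (h d : ℕ) (Mv : Fin h → ℝ) (MU : Fin h → Fin d → ℝ)
    (hMv : ∀ i, Mv i = 0 ∨ Mv i = 1) (hMU : ∀ i j, MU i j = 0 ∨ MU i j = 1) :
    ∑ i ∈ Finset.univ.filter (fun i : Fin h => Mv i = 1), ∑ j, MU i j
      ≤ (h:ℝ) * d - max (((Finset.univ.filter fun p : Fin h × Fin d => MU p.1 p.2 = 0).card : ℝ))
          ((d : ℝ) * ((Finset.univ.filter fun i : Fin h => Mv i = 0).card : ℝ)) := by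
  set S := Finset.univ.filter (fun i : Fin h => Mv i = 1) with hS
  set zU := (Finset.univ.filter fun p : Fin h × Fin d => MU p.1 p.2 = 0).card with hzU
  set zv := (Finset.univ.filter fun i : Fin h => Mv i = 0).card with hzv
  have hMUnn : ∀ i j, (0:ℝ) ≤ MU i j := fun i j => by rcases hMU i j with e|e <;> simp [e]
  have hMUle : ∀ i j, MU i j ≤ 1 := fun i j => by rcases hMU i j with e|e <;> simp [e]
  -- bound 1 : sum ≤ h*d - zU
  have hb1 : ∑ i ∈ S, ∑ j, MU i j ≤ (h:ℝ)*d - zU := by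
    have h1 : ∑ i ∈ S, ∑ j, MU i j ≤ ∑ i : Fin h, ∑ j, MU i j :=
      Finset.sum_le_sum_of_subset_of_nonneg (Finset.filter_subset _ _)
        (fun i _ _ => Finset.sum_nonneg fun j _ => hMUnn i j)
    have h2 : ∑ i : Fin h, ∑ j, MU i j = ∑ p : Fin h × Fin d, MU p.1 p.2 := by
      rw [Fintype.sum_prod_type]
    have h3 : ∑ p : Fin h × Fin d, MU p.1 p.2
        = ((Finset.univ.filter fun p : Fin h × Fin d => ¬ (MU p.1 p.2 = 0)).card : ℝ) := by
      rw [← Finset.sum_filter_add_sum_filter_not Finset.univ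
        (fun p : Fin h × Fin d => MU p.1 p.2 = 0)]
      rw [Finset.sum_congr rfl (fun p hp => (Finset.mem_filter.mp hp).2),
        Finset.sum_const, smul_zero, zero_add]
      rw [Finset.sum_congr rfl (fun p hp => ?_), Finset.sum_const, nsmul_eq_mul, mul_one]
      rcases hMU p.1 p.2 with e|e
      · exact absurd e (Finset.mem_filter.mp hp).2
      · exact e
    have h4 : (Finset.univ.filter fun p : Fin h × Fin d => ¬ (MU p.1 p.2 = 0)).card
        = h * d - zU := by
      have := Finset.card_filter_add_card_filter_not (s := Finset.univ)
        (p := fun p : Fin h × Fin d => MU p.1 p.2 = 0)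
      simp only [Finset.card_univ, Fintype.card_prod, Fintype.card_fin] at this
      omega
    have h5 : (zU : ℝ) ≤ (h:ℝ)*d := by
      have : zU ≤ h * d := by
        calc zU ≤ Finset.univ.card := Finset.card_filter_le _ _
        _ = h * d := by simp [Finset.card_univ]
      exact_mod_cast this
    have h6 : zU ≤ h * d := by exact_mod_cast h5
    calc ∑ i ∈ S, ∑ j, MU i j ≤ _ := h1
      _ = ((h*d - zU : ℕ) : ℝ) := by rw [h2, h3, h4]
      _ = (h:ℝ)*d - zU := by push_cast [h6]; ring
  -- bound 2 : sum ≤ (h - zv) * d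
  have hb2 : ∑ i ∈ S, ∑ j, MU i j ≤ (h:ℝ)*d - d*zv := by
    have h1 : ∑ i ∈ S, ∑ j, MU i j ≤ ∑ i ∈ S, (d:ℝ) := by
      refine Finset.sum_le_sum fun i _ => ?_
      calc ∑ j, MU i j ≤ ∑ _j : Fin d, (1:ℝ) := Finset.sum_le_sum fun j _ => hMUle i j
        _ = d := by simp
    have h2 : S.card = h - zv := by
      have hST : S = Finset.univ.filter (fun i : Fin h => ¬ (Mv i = 0)) := by
        rw [hS]
        refine Finset.filter_congr fun i _ => ?_
        rcases hMv i with e|e <;> simp [e]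
      have := Finset.card_filter_add_card_filter_not (s := Finset.univ)
        (p := fun i : Fin h => Mv i = 0)
      simp only [Finset.card_univ, Fintype.card_fin] at this
      rw [hST]
      omega
    have hzvh : zv ≤ h := by
      calc zv ≤ Finset.univ.card := Finset.card_filter_le _ _
        _ = h := by simp
    rw [Finset.sum_const, nsmul_eq_mul, h2] at h1
    calc ∑ i ∈ S, ∑ j, MU i j ≤ ((h - zv : ℕ):ℝ) * d := h1
      _ = (h:ℝ)*d - d*zv := by push_cast [hzvh]; ring
  rcases max_cases ((zU:ℝ)) ((d:ℝ)*zv) with ⟨e,_⟩|⟨e,_⟩ <;> rw [e]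
  · exact hb1
  · exact hb2


theorem stmt7 (h d : ℕ) (hh : 1 ≤ h) (hd : 1 ≤ d) (b : ℝ) (hb : 0 < b)
    (Mv : Fin h → ℝ) (MU : Fin h → Fin d → ℝ)
    (hMv : ∀ i, Mv i = 0 ∨ Mv i = 1) (hMU : ∀ i j, MU i j = 0 ∨ MU i j = 1) :
    ⨍ x in Metric.ball (0 : EuclideanSpace ℝ (Fin d)) b,
        Real.sqrt (∑ i ∈ Finset.univ.filter (fun i : Fin h => Mv i = 1),
          ∑ j, (MU i j * x j) ^ 2)
      ≤ Real.sqrt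
          (((h : ℝ) -
              max (((Finset.univ.filter fun p : Fin h × Fin d => MU p.1 p.2 = 0).card : ℝ)) ((d : ℝ) * ((Finset.univ.filter fun i : Fin h => Mv i = 0).card : ℝ)) / d) *
            ((d : ℝ) * b ^ 2 / (d + 2))) := by
  classical
  set E := EuclideanSpace ℝ (Fin d)
  set B := Metric.ball (0 : E) b with hB
  set S := Finset.univ.filter (fun i : Fin h => Mv i = 1) with hS
  set F : E → ℝ := fun x => ∑ i ∈ S, ∑ j, (MU i j * x j) ^ 2 with hF
  have hFcont : Continuous F := by
    refine continuous_finset_sum _ fun i _ => continuous_finset_sum _ fun j _ => ?_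
    exact (continuous_const.mul (EuclideanSpace.proj j).continuous).pow 2
  have hFnn : ∀ x, 0 ≤ F x := fun x =>
    Finset.sum_nonneg fun i _ => Finset.sum_nonneg fun j _ => sq_nonneg _
  have hμ0 : volume B ≠ 0 := (Metric.measure_ball_pos volume 0 hb).ne'
  have hμtop : volume B ≠ ⊤ := measure_ball_lt_top.ne
  have hvpos : 0 < (volume B).toReal := ENNReal.toReal_pos hμ0 hμtop
  -- Jensen
  have hJ : (⨍ x in B, Real.sqrt (F x)) ≤ Real.sqrt (⨍ x in B, F x) := by
    refine (Real.strictConcaveOn_sqrt.concaveOn).le_map_set_average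
      Real.continuous_sqrt.continuousOn isClosed_Ici hμ0 hμtop
      (ae_of_all _ fun x => hFnn x) (myIntOn d b F hFcont)
      (myIntOn d b _ (Real.continuous_sqrt.comp hFcont))
  -- compute the average of F
  have hterm : ∀ (i : Fin h) (j : Fin d), ∫ x in B, (MU i j * x j)^2
      = MU i j * ((volume B).toReal * (b^2/(d+2))) := by
    intro i j
    have e1 : ∀ x : E, x ∈ B → (MU i j * x j)^2 = MU i j ^ 2 * (x j)^2 :=
      fun x _ => by ring
    rw [setIntegral_congr_fun measurableSet_ball e1, integral_const_mul,
      coord_moment d hd b hb j]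
    rcases hMU i j with e|e <;> rw [e] <;> ring
  have hintF : ∫ x in B, F x
      = (∑ i ∈ S, ∑ j, MU i j) * ((volume B).toReal * (b^2/(d+2))) := by
    rw [hF]
    rw [integral_finset_sum _ (fun i _ => myIntOn d b (fun x => ∑ j, (MU i j * x j)^2)
      (continuous_finset_sum _ fun j _ =>
        (continuous_const.mul (EuclideanSpace.proj j).continuous).pow 2))]
    rw [Finset.sum_congr rfl (fun i _ => integral_finset_sum Finset.univ
      (fun j _ => myIntOn d b (fun x => (MU i j * x j)^2)
        ((continuous_const.mul (EuclideanSpace.proj j).continuous).pow 2)))]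
    rw [Finset.sum_congr rfl (fun i _ => Finset.sum_congr rfl (fun j _ => hterm i j))]
    rw [Finset.sum_mul]
    exact Finset.sum_congr rfl fun i _ => (Finset.sum_mul _ _ _).symm
  have havgF : (⨍ x in B, F x) = (∑ i ∈ S, ∑ j, MU i j) * (b^2/(d+2)) := by
    rw [setAverage_eq, hintF, smul_eq_mul]
    field_simp
    rw [measureReal_def]; field_simp
  -- final comparison
  refine hJ.trans (Real.sqrt_le_sqrt ?_)
  rw [havgF]
  have hcount := count_bound h d Mv MU hMv hMU
  have hd0 : (d:ℝ) ≠ 0 := by positivity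
  have hrhs : ((h : ℝ) -
        max (((Finset.univ.filter fun p : Fin h × Fin d => MU p.1 p.2 = 0).card : ℝ))
          ((d : ℝ) * ((Finset.univ.filter fun i : Fin h => Mv i = 0).card : ℝ)) / d) *
      ((d : ℝ) * b ^ 2 / (d + 2))
      = ((h:ℝ) * d - max (((Finset.univ.filter fun p : Fin h × Fin d => MU p.1 p.2 = 0).card : ℝ))
          ((d : ℝ) * ((Finset.univ.filter fun i : Fin h => Mv i = 0).card : ℝ)))
        * (b^2/(d+2)) := by
    field_simp
  rw [hrhs]
  exact mul_le_mul_of_nonneg_right hcount (by positivity)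
end
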